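/- arXiv:1506.06243 — 3 statements merged into one kernel-verified Lean document; each statement's English description precedes it below -/
import Mathlib

section
/- Let K(t) = Σ_{k∈ℤ} λ_k e^{ikt} with k·λ_k → 0 as |k| → ∞, and suppose the series Σ_{k∈ℤ} k·Δλ_k e^{ikt} (where Δλ_k = λ_k − λ_{k+1}) converges in L¹(−π,π) and K is differentiable with K'(t) = Σ k λ_k i e^{ikt}. Then ∫_{−π}^{π} |t·K'(t)| dt ≤ (π/2) ∫_{−π}^{π} |K(t)| dt + (π/2) ∫_{−π}^{π} |Σ_{k∈ℤ} k·Δλ_k e^{ikt}| dt, provided the right-hand side is finite. -/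
open Real Complex MeasureTheory Filter

private lemma telescope_Icc (h : ℤ → ℂ) : ∀ N : ℕ,
    ∑ k ∈ Finset.Icc (-(N:ℤ)) (N:ℤ), (h (k+1) - h k) = h ((N:ℤ)+1) - h (-(N:ℤ)) := by
  intro N
  induction N with
  | zero => simp
  | succ n ih =>
    have hset : Finset.Icc (-((n:ℤ)+1)) ((n:ℤ)+1)
        = insert (-((n:ℤ)+1)) (insert ((n:ℤ)+1) (Finset.Icc (-(n:ℤ)) (n:ℤ))) := by
      ext k; simp only [Finset.mem_Icc, Finset.mem_insert]; omega
    push_cast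
    rw [hset, Finset.sum_insert (by simp only [Finset.mem_insert, Finset.mem_Icc]; omega),
        Finset.sum_insert (by simp only [Finset.mem_Icc]; omega), ih]
    have e1 : -((n:ℤ)+1) + 1 = -(n:ℤ) := by ring
    rw [e1]
    ring

private lemma hasSum_shift_zero (h : ℤ → ℂ) (hh : Tendsto h cofinite (nhds 0))
    {x : ℂ} (hx : HasSum (fun k => h (k+1) - h k) x) : x = 0 := by
  have hmono : Monotone (fun N : ℕ => Finset.Icc (-(N:ℤ)) (N:ℤ)) := by
    intro a b hab
    exact Finset.Icc_subset_Icc (by exact_mod_cast neg_le_neg (Int.ofNat_le.2 hab))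
      (by exact_mod_cast Int.ofNat_le.2 hab)
  have hcover : ∀ s : ℤ, ∃ N : ℕ, s ∈ Finset.Icc (-(N:ℤ)) (N:ℤ) := fun s =>
    ⟨s.natAbs, by simp only [Finset.mem_Icc]; omega⟩
  have htend : Tendsto (fun N : ℕ => Finset.Icc (-(N:ℤ)) (N:ℤ)) atTop atTop :=
    tendsto_atTop_finset_of_monotone hmono hcover
  have h1 : Tendsto (fun N : ℕ => h ((N:ℤ)+1) - h (-(N:ℤ))) atTop (nhds x) := by
    have := (hx : Tendsto _ atTop (nhds x)).comp htend
    simpa only [Function.comp_def, telescope_Icc h] using this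
  have hTop : Tendsto (fun N : ℕ => (N:ℤ)+1) atTop cofinite := by
    rw [Int.cofinite_eq]
    exact Tendsto.mono_right
      (tendsto_atTop_add_const_right _ 1 tendsto_natCast_atTop_atTop) le_sup_right
  have hBot : Tendsto (fun N : ℕ => -(N:ℤ)) atTop cofinite := by
    rw [Int.cofinite_eq]
    exact Tendsto.mono_right
      (tendsto_neg_atTop_atBot.comp tendsto_natCast_atTop_atTop) le_sup_left
  have h2 : Tendsto (fun N : ℕ => h ((N:ℤ)+1) - h (-(N:ℤ))) atTop (nhds 0) := by
    simpa using (hh.comp hTop).sub (hh.comp hBot)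
  exact tendsto_nhds_unique h1 h2

private lemma norm_exp_I_sub_one (t : ℝ) :
    ‖Complex.exp (Complex.I * t) - 1‖ = 2 * |Real.sin (t/2)| := by
  have hz : Complex.exp (Complex.I * t) - 1
      = ((Real.cos t - 1 : ℝ) : ℂ) + ((Real.sin t : ℝ) : ℂ) * Complex.I := by
    rw [mul_comm, Complex.exp_mul_I]
    push_cast [Complex.ofReal_cos, Complex.ofReal_sin]
    ring
  have hsq : ‖Complex.exp (Complex.I * t) - 1‖^2 = (2 * |Real.sin (t/2)|)^2 := by
    rw [hz]
    rw [Complex.sq_norm, Complex.normSq_add_mul_I]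
    have hs : Real.sin (t/2)^2 = 1/2 - Real.cos t / 2 := by
      have := Real.sin_sq_eq_half_sub (t/2)
      rwa [show 2 * (t/2) = t by ring] at this
    have hsc := Real.sin_sq_add_cos_sq t
    have habs : |Real.sin (t/2)|^2 = Real.sin (t/2)^2 := sq_abs _
    nlinarith [hsc, hs, habs]
  nlinarith [norm_nonneg (Complex.exp (Complex.I * t) - 1), abs_nonneg (Real.sin (t/2)),
    hsq, Real.pi_pos]

theorem trig_series_derivative_L1_bound
    (lam : ℤ → ℂ) (K K' S : ℝ → ℂ)
    (hlam : Tendsto (fun k : ℤ => (k : ℂ) * lam k) cofinite (nhds 0))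
    (hK : ∀ t : ℝ, HasSum (fun k : ℤ => lam k * Complex.exp (Complex.I * k * t)) (K t))
    (hK' : ∀ t : ℝ, HasSum (fun k : ℤ =>
      (k : ℂ) * lam k * Complex.I * Complex.exp (Complex.I * k * t)) (K' t))
    (hderiv : ∀ t : ℝ, HasDerivAt K (K' t) t)
    (hS : ∀ t : ℝ, HasSum (fun k : ℤ =>
      (k : ℂ) * (lam k - lam (k + 1)) * Complex.exp (Complex.I * k * t)) (S t))
    (hKint : IntervalIntegrable K volume (-π) π)
    (hSint : IntervalIntegrable S volume (-π) π) :
    ∫ t in (-π)..π, |t| * ‖K' t‖ ≤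
      (π / 2) * ∫ t in (-π)..π, ‖K t‖ + (π / 2) * ∫ t in (-π)..π, ‖S t‖ := by
  -- lam tends to 0
  have hlam0 : Tendsto lam cofinite (nhds 0) := by
    apply squeeze_zero_norm' ?_ (tendsto_zero_iff_norm_tendsto_zero.mp hlam)
    rw [eventually_cofinite]
    apply Set.Finite.subset (Set.finite_singleton (0:ℤ))
    intro k hk
    simp only [Set.mem_setOf_eq, not_le] at hk
    by_contra h0
    simp only [Set.mem_singleton_iff] at h0
    have h1 : (1:ℝ) ≤ |(k:ℝ)| := by
      rw [← Int.cast_abs]; exact_mod_cast Int.one_le_abs h0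
    have : ‖(k:ℂ) * lam k‖ = |(k:ℝ)| * ‖lam k‖ := by
      rw [norm_mul]; norm_num
    nlinarith [norm_nonneg (lam k), hk.le, this ▸ hk]
  -- key identity
  have key : ∀ t : ℝ, (Complex.exp (Complex.I * t) - 1) * (-Complex.I) * K' t
      = Complex.exp (Complex.I * t) * S t - K t := by
    intro t
    set h : ℤ → ℂ := fun k => ((k:ℂ) - 1) * lam k * Complex.exp (Complex.I * k * t) with hdef
    have hA := (hK' t).mul_left ((Complex.exp (Complex.I * t) - 1) * (-Complex.I))
    have hB := ((hS t).mul_left (Complex.exp (Complex.I * t))).sub (hK t)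
    have hD := hA.sub hB
    have hfun : (fun k : ℤ => (Complex.exp (Complex.I * t) - 1) * (-Complex.I) *
          ((k:ℂ) * lam k * Complex.I * Complex.exp (Complex.I * k * t)) -
        (Complex.exp (Complex.I * t) *
          ((k:ℂ) * (lam k - lam (k + 1)) * Complex.exp (Complex.I * k * t)) -
          lam k * Complex.exp (Complex.I * k * t)))
        = fun k => h (k+1) - h k := by
      funext k
      have hshift : Complex.exp (Complex.I * ((k:ℤ)+1 : ℤ) * t)
          = Complex.exp (Complex.I * t) * Complex.exp (Complex.I * k * t) := by
        rw [← Complex.exp_add]; push_cast; ring_nf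
      simp only [hdef]
      rw [hshift]
      push_cast
      linear_combination (-(Complex.exp (Complex.I * t) - 1) * (k:ℂ) * lam k *
        Complex.exp (Complex.I * k * t)) * Complex.I_sq
    rw [hfun] at hD
    have hh : Tendsto h cofinite (nhds 0) := by
      apply squeeze_zero_norm ?_ (tendsto_zero_iff_norm_tendsto_zero.mp (by simpa using hlam.sub hlam0))
      intro k
      have hexp : ‖Complex.exp (Complex.I * k * t)‖ = 1 := by
        rw [show Complex.I * (k:ℂ) * (t:ℂ) = (((k:ℝ) * t : ℝ) : ℂ) * Complex.I by
          push_cast; ring]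
        exact Complex.norm_exp_ofReal_mul_I _
      have : h k = ((k:ℂ) * lam k - lam k) * Complex.exp (Complex.I * k * t) := by
        simp only [hdef]; ring
      rw [this, norm_mul, hexp, mul_one]
    have := hasSum_shift_zero h hh hD
    exact sub_eq_zero.mp this
  -- pointwise inequality
  have hpt : ∀ t ∈ Set.Icc (-π) π, |t| * ‖K' t‖ ≤ π/2 * (‖K t‖ + ‖S t‖) := by
    intro t ht
    have htabs : |t| ≤ π := abs_le.mpr ⟨ht.1, ht.2⟩
    have hj : 2/π * |t/2| ≤ |Real.sin (t/2)| := by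
      apply Real.mul_abs_le_abs_sin
      rw [abs_div]
      simp only [_root_.abs_two]
      linarith [abs_nonneg t]
    have h1 : |t| ≤ π * |Real.sin (t/2)| := by
      have h2 : 2/π * |t/2| = |t|/π := by
        rw [abs_div, _root_.abs_two]; field_simp
      rw [h2] at hj
      calc |t| = π * (|t|/π) := by field_simp
        _ ≤ π * |Real.sin (t/2)| :=
          mul_le_mul_of_nonneg_left hj Real.pi_pos.le
    have h3 : 2 * |Real.sin (t/2)| * ‖K' t‖ ≤ ‖K t‖ + ‖S t‖ := by
      have h4 := congrArg norm (key t)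
      rw [norm_mul, norm_mul, norm_neg, Complex.norm_I, mul_one,
        norm_exp_I_sub_one] at h4
      calc 2 * |Real.sin (t/2)| * ‖K' t‖ = ‖Complex.exp (Complex.I * t) * S t - K t‖ := h4
        _ ≤ ‖Complex.exp (Complex.I * t) * S t‖ + ‖K t‖ := norm_sub_le _ _
        _ ≤ ‖S t‖ + ‖K t‖ := by
            rw [norm_mul]
            have : ‖Complex.exp (Complex.I * t)‖ = 1 := by
              rw [show Complex.I * (t:ℂ) = ((t:ℝ):ℂ) * Complex.I by ring]
              exact Complex.norm_exp_ofReal_mul_I _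
            rw [this, one_mul]
        _ = ‖K t‖ + ‖S t‖ := by ring
    calc |t| * ‖K' t‖ ≤ (π * |Real.sin (t/2)|) * ‖K' t‖ :=
          mul_le_mul_of_nonneg_right h1 (norm_nonneg _)
      _ = π/2 * (2 * |Real.sin (t/2)| * ‖K' t‖) := by ring
      _ ≤ π/2 * (‖K t‖ + ‖S t‖) :=
          mul_le_mul_of_nonneg_left h3 (by positivity)
  -- measurability of K'
  have hK'eq : K' = deriv K := funext fun t => ((hderiv t).deriv).symm
  have hmeas : Measurable fun t : ℝ => |t| * ‖K' t‖ := by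
    rw [hK'eq]
    exact (measurable_abs).mul (measurable_deriv K).norm
  -- integrability
  have hbound : IntervalIntegrable (fun t => π/2 * (‖K t‖ + ‖S t‖)) volume (-π) π :=
    (hKint.norm.add hSint.norm).const_mul _
  have hg : IntervalIntegrable (fun t => |t| * ‖K' t‖) volume (-π) π := by
    rw [intervalIntegrable_iff] at hbound ⊢
    apply MeasureTheory.Integrable.mono hbound hmeas.aestronglyMeasurable.restrict
    have hsub : Set.uIoc (-π) π ⊆ Set.Icc (-π) π := by
      rw [Set.uIoc_of_le (by linarith [Real.pi_pos])]
      exact Set.Ioc_subset_Icc_self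
    filter_upwards [ae_restrict_mem measurableSet_uIoc] with t ht
    have h5 := hpt t (hsub ht)
    have : ‖|t| * ‖K' t‖‖ = |t| * ‖K' t‖ := by
      rw [Real.norm_eq_abs, _root_.abs_of_nonneg (by positivity)]
    rw [this, Real.norm_eq_abs]
    exact h5.trans (le_abs_self _)
  have hfinal : ∫ t in (-π)..π, |t| * ‖K' t‖ ≤ ∫ t in (-π)..π, π/2 * (‖K t‖ + ‖S t‖) :=
    intervalIntegral.integral_mono_on (by linarith [Real.pi_pos]) hg hbound hpt
  have hb : ∫ t in (-π)..π, |t| * ‖K' t‖ ≤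
      π/2 * (∫ t in (-π)..π, ‖K t‖) + π/2 * (∫ t in (-π)..π, ‖S t‖) := by
    calc ∫ t in (-π)..π, |t| * ‖K' t‖ ≤ ∫ t in (-π)..π, π/2 * (‖K t‖ + ‖S t‖) := hfinal
      _ = π/2 * ∫ t in (-π)..π, (‖K t‖ + ‖S t‖) := intervalIntegral.integral_const_mul _ _
      _ = π/2 * ((∫ t in (-π)..π, ‖K t‖) + ∫ t in (-π)..π, ‖S t‖) := by
          rw [intervalIntegral.integral_add hKint.norm hSint.norm]
      _ = π/2 * (∫ t in (-π)..π, ‖K t‖) + π/2 * (∫ t in (-π)..π, ‖S t‖) := by ring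
  have hc2 : 0 ≤ ∫ t in (-π)..π, ‖S t‖ :=
    intervalIntegral.integral_nonneg (by linarith [Real.pi_pos]) (fun t _ => norm_nonneg _)
  have hRHS : (∫ t in (-π)..π, (‖K t‖ + π/2 * ∫ t in (-π)..π, ‖S t‖))
      = (∫ t in (-π)..π, ‖K t‖) + 2*π*(π/2 * ∫ t in (-π)..π, ‖S t‖) := by
    rw [intervalIntegral.integral_add hKint.norm intervalIntegrable_const,
      intervalIntegral.integral_const, smul_eq_mul]
    ring
  calc ∫ t in (-π)..π, |t| * ‖K' t‖ ≤
      π/2 * (∫ t in (-π)..π, ‖K t‖) + π/2 * (∫ t in (-π)..π, ‖S t‖) := hb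
    _ ≤ π/2 * ((∫ t in (-π)..π, ‖K t‖) + 2*π*(π/2 * ∫ t in (-π)..π, ‖S t‖)) := by
        have hpi2 : (0:ℝ) ≤ π^2 - 1 := by nlinarith [Real.pi_gt_three]
        nlinarith [mul_nonneg (mul_nonneg hc2 (by positivity : (0:ℝ) ≤ π/2)) hpi2]
    _ = (π / 2) * ∫ t in (-π)..π, ‖K t‖ + (π / 2) * ∫ t in (-π)..π, ‖S t‖ := by
        rw [hRHS]
end

section
/- Let Φ_n be the Fejér kernel, Φ_n(t) = sin²((n+1)t/2) / (2(n+1) sin²(t/2)). There exists an absolute constant c > 0 such that for every continuous function F₀ on [−π,π] and every n ≥ 1, |F₀(0) − (1/π) ∫_{−π}^{π} F₀(t) Φ_n(t) dt| ≤ c · ω(F₀; ln(n+1)/(n+1)), where ω is the modulus of continuity of F₀ on [−π,π]. -/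
open Real MeasureTheory Set Finset

section FejerAux

lemma sin_sq_diff (A B : ℝ) : Real.sin A ^ 2 - Real.sin B ^ 2 = Real.sin (A+B) * Real.sin (A-B) := by
  rw [Real.sin_add, Real.sin_sub]
  linear_combination (Real.sin B)^2 * (Real.sin_sq_add_cos_sq A) - (Real.sin A)^2 * (Real.sin_sq_add_cos_sq B)

lemma dirichlet (m : ℕ) (t : ℝ) :
    2 * Real.sin (t/2) * (1/2 + ∑ k ∈ Finset.Icc 1 m, Real.cos (k*t))
      = Real.sin (((m:ℝ) + 1/2)*t) := by
  induction m with
  | zero => simp; ring_nf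
  | succ m ih =>
    rw [Finset.sum_Icc_succ_top (by omega)]
    have h := Real.sin_sub_sin (((m:ℝ)+1+1/2)*t) (((m:ℝ)+1/2)*t)
    have e1 : ((((m:ℝ)+1+1/2)*t - ((m:ℝ)+1/2)*t)/2) = t/2 := by ring
    have e2 : ((((m:ℝ)+1+1/2)*t + ((m:ℝ)+1/2)*t)/2) = ((m:ℝ)+1)*t := by ring
    rw [e1, e2] at h
    push_cast
    push_cast at ih
    linear_combination ih - h

lemma fejerG (n : ℕ) (t : ℝ) :
    2 * Real.sin (t/2)^2 * (((n:ℝ)+1)/2 + ∑ k ∈ Finset.Icc 1 n, (((n:ℝ)+1-k) * Real.cos (k*t)))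
      = Real.sin (((n:ℝ)+1)*t/2)^2 := by
  induction n with
  | zero => simp; ring_nf
  | succ n ih =>
    have hstep : ∀ k : ℕ, ((n:ℝ)+1+1-k) * Real.cos (k*t)
        = ((n:ℝ)+1-k) * Real.cos (k*t) + Real.cos (k*t) := by intro k; ring
    have hsum : ∑ k ∈ Finset.Icc 1 (n+1), (((n:ℝ)+1+1-k) * Real.cos (k*t))
        = (∑ k ∈ Finset.Icc 1 n, (((n:ℝ)+1-k) * Real.cos (k*t)))
          + ∑ k ∈ Finset.Icc 1 (n+1), Real.cos (k*t) := by
      rw [Finset.sum_congr rfl (fun k _ => hstep k), Finset.sum_add_distrib,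
          Finset.sum_Icc_succ_top (by omega : 1 ≤ n+1) (fun k => ((n:ℝ)+1-(k:ℝ)) * Real.cos (k*t))]
      push_cast
      ring
    have hd := dirichlet (n+1) t
    have hs := sin_sq_diff (((n:ℝ)+1+1)*t/2) (((n:ℝ)+1)*t/2)
    have e1 : (((n:ℝ)+1+1)*t/2 + ((n:ℝ)+1)*t/2) = ((n:ℝ)+1+1/2)*t := by ring
    have e2 : (((n:ℝ)+1+1)*t/2 - ((n:ℝ)+1)*t/2) = t/2 := by ring
    rw [e1, e2] at hs
    push_cast at hd hsum ih ⊢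
    rw [hsum]
    linear_combination ih + Real.sin (t/2) * hd - hs

noncomputable def fejK (n : ℕ) (t : ℝ) : ℝ :=
  1/2 + ∑ k ∈ Finset.Icc 1 n, (1 - (k : ℝ) / (n + 1)) * Real.cos (k * t)

lemma fejK_identity (n : ℕ) (t : ℝ) :
    2 * Real.sin (t/2)^2 * (((n:ℝ)+1) * fejK n t) = Real.sin (((n:ℝ)+1)*t/2)^2 := by
  have h : ((n:ℝ)+1) * fejK n t
      = ((n:ℝ)+1)/2 + ∑ k ∈ Finset.Icc 1 n, (((n:ℝ)+1-k) * Real.cos (k*t)) := by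
    rw [fejK, mul_add, Finset.mul_sum]
    congr 1
    · ring
    · apply Finset.sum_congr rfl
      intro k _
      have : ((n:ℝ)+1) ≠ 0 := by positivity
      field_simp
  rw [h, fejerG]

lemma fejK_nonneg (n : ℕ) (t : ℝ) : 0 ≤ fejK n t := by
  by_cases hs : Real.sin (t/2) = 0
  · obtain ⟨m, hm⟩ := Real.sin_eq_zero_iff.mp hs
    have ht : t = (m:ℝ) * (2*π) := by linarith [hm]
    rw [fejK]
    have hc : ∀ k ∈ Finset.Icc 1 n, 0 ≤ (1 - (k : ℝ) / (n + 1)) * Real.cos (k * t) := by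
      intro k hk
      have hkn : k ≤ n := (Finset.mem_Icc.mp hk).2
      have : ((k:ℝ)) * t = ((k * m : ℤ):ℝ) * (2*π) := by push_cast [ht]; ring
      rw [this, Real.cos_int_mul_two_pi]
      have : (k:ℝ) ≤ (n:ℝ) + 1 := by exact_mod_cast Nat.le_succ_of_le hkn
      have hpos : (0:ℝ) < (n:ℝ)+1 := by positivity
      rw [mul_one]
      have : (k:ℝ)/((n:ℝ)+1) ≤ 1 := by rw [div_le_one hpos]; linarith
      linarith
    have := Finset.sum_nonneg hc
    linarith
  · have h := fejK_identity n t
    have hs2 : 0 < Real.sin (t/2)^2 := by positivity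
    have hn : (0:ℝ) < (n:ℝ)+1 := by positivity
    nlinarith [sq_nonneg (Real.sin (((n:ℝ)+1)*t/2)), mul_pos hs2 hn]

lemma fejK_le_linear (n : ℕ) (t : ℝ) : fejK n t ≤ (n:ℝ) + 1 := by
  rw [fejK]
  have hb : ∀ k ∈ Finset.Icc 1 n, (1 - (k : ℝ) / (n + 1)) * Real.cos (k * t) ≤ 1 := by
    intro k hk
    have hkn : k ≤ n := (Finset.mem_Icc.mp hk).2
    have h1 : (0:ℝ) ≤ 1 - (k:ℝ)/((n:ℝ)+1) := by
      have hpos : (0:ℝ) < (n:ℝ)+1 := by positivity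
      have : (k:ℝ) ≤ (n:ℝ)+1 := by exact_mod_cast Nat.le_succ_of_le hkn
      have : (k:ℝ)/((n:ℝ)+1) ≤ 1 := by rw [div_le_one hpos]; linarith
      linarith
    have h2 : (1:ℝ) - (k:ℝ)/((n:ℝ)+1) ≤ 1 := by
      have : (0:ℝ) ≤ (k:ℝ)/((n:ℝ)+1) := by positivity
      linarith
    calc (1 - (k : ℝ) / (n + 1)) * Real.cos (k * t) ≤ (1 - (k : ℝ) / (n + 1)) * 1 :=
          mul_le_mul_of_nonneg_left (Real.cos_le_one _) h1
      _ ≤ 1 := by linarith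
  have := Finset.sum_le_card_nsmul _ _ 1 hb
  rw [Nat.card_Icc, Nat.add_sub_cancel, nsmul_eq_mul, mul_one] at this
  linarith

lemma fejK_even (n : ℕ) (t : ℝ) : fejK n (-t) = fejK n t := by
  unfold fejK
  congr 1
  apply Finset.sum_congr rfl
  intro k _
  rw [mul_neg, Real.cos_neg]

lemma fejK_decay (n : ℕ) (t : ℝ) (h1 : 0 < t) (h2 : t ≤ π) :
    fejK n t ≤ π^2 / (2*((n:ℝ)+1)*t^2) := by
  have hsin : t/π ≤ Real.sin (t/2) := by
    have := Real.mul_le_sin (x := t/2) (by linarith) (by linarith)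
    have hπ : (0:ℝ) < π := Real.pi_pos
    calc t/π = 2/π * (t/2) := by field_simp
      _ ≤ Real.sin (t/2) := this
  have hπ : (0:ℝ) < π := Real.pi_pos
  have htπ : 0 < t/π := by positivity
  have hs2 : (t/π)^2 ≤ Real.sin (t/2)^2 := by nlinarith
  have h := fejK_identity n t
  have hb : Real.sin (((n:ℝ)+1)*t/2)^2 ≤ 1 := by
    nlinarith [Real.neg_one_le_sin (((n:ℝ)+1)*t/2), Real.sin_le_one (((n:ℝ)+1)*t/2)]
  have hn : (0:ℝ) < (n:ℝ)+1 := by positivity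
  have hK := fejK_nonneg n t
  have hsin' : t ≤ Real.sin (t/2) * π := (div_le_iff₀ hπ).mp hsin
  have ht2 : t^2 ≤ π^2 * Real.sin (t/2)^2 := by nlinarith [mul_self_le_mul_self h1.le hsin']
  have hnk : 0 ≤ ((n:ℝ)+1) * fejK n t := mul_nonneg hn.le hK
  have h2 : π^2*(2 * Real.sin (t/2)^2 * (((n:ℝ)+1) * fejK n t)) = π^2*Real.sin (((n:ℝ)+1)*t/2)^2 := by
    rw [h]
  rw [le_div_iff₀ (by positivity)]
  have hint1 := mul_le_mul_of_nonneg_right ht2 hnk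
  have hint2 := mul_le_mul_of_nonneg_left hb (sq_nonneg π)
  nlinarith [hint1, hint2, h2]

lemma fejK_cont (n : ℕ) : Continuous (fejK n) := by
  unfold fejK
  exact continuous_const.add (continuous_finset_sum _ fun k _ =>
    continuous_const.mul (Real.continuous_cos.comp (continuous_const.mul continuous_id)))

lemma cos_interval_integral (k : ℝ) (hk : k ≠ 0) (a b : ℝ) :
    ∫ x in a..b, Real.cos (k*x) = (Real.sin (k*b) - Real.sin (k*a))/k := by
  rw [intervalIntegral.integral_comp_mul_left (fun x => Real.cos x) hk, integral_cos]
  simp only [smul_eq_mul]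
  field_simp [mul_comm]

lemma fejK_integral (n : ℕ) : ∫ t in (-π)..π, fejK n t = π := by
  unfold fejK
  have hci : ∀ k : ℕ, Continuous fun t : ℝ => (1 - (k : ℝ) / (n + 1)) * Real.cos (k * t) :=
    fun k => continuous_const.mul (Real.continuous_cos.comp (continuous_const.mul continuous_id))
  have hsc : Continuous fun t : ℝ => ∑ k ∈ Finset.Icc 1 n, (1 - (k : ℝ) / (n + 1)) * Real.cos (k * t) :=
    continuous_finset_sum _ fun k _ => hci k
  rw [intervalIntegral.integral_add intervalIntegrable_const (hsc.intervalIntegrable _ _),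
    intervalIntegral.integral_finset_sum (fun k _ => (hci k).intervalIntegrable _ _)]
  have hz : ∀ k ∈ Finset.Icc 1 n,
      (∫ t in (-π)..π, (1 - (k : ℝ) / (n + 1)) * Real.cos ((k:ℝ) * t)) = 0 := by
    intro k hk
    have hk1 : 1 ≤ k := (Finset.mem_Icc.mp hk).1
    have hkR : (0:ℝ) < (k:ℝ) := by exact_mod_cast hk1
    rw [intervalIntegral.integral_const_mul, cos_interval_integral _ hkR.ne']
    have h1 : Real.sin ((k:ℝ)*π) = 0 := Real.sin_nat_mul_pi k
    have h2 : Real.sin ((k:ℝ)*(-π)) = 0 := by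
      rw [mul_neg, Real.sin_neg, h1, neg_zero]
    rw [h1, h2]
    simp
  rw [Finset.sum_congr rfl hz]
  simp
  ring

lemma chain_bound (F ω : ℝ → ℝ) (a b δ : ℝ) (hδ : 0 < δ)
    (hmod : ∀ t ∈ Set.Icc a b, ∀ s ∈ Set.Icc a b, |t - s| ≤ δ → |F t - F s| ≤ ω δ) :
    ∀ m : ℕ, ∀ x ∈ Set.Icc a b, ∀ y ∈ Set.Icc a b, |x - y| ≤ m * δ →
      |F x - F y| ≤ m * ω δ := by
  intro m
  induction m with
  | zero =>
    intro x _ y _ hxy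
    simp only [Nat.cast_zero, zero_mul] at hxy ⊢
    have : x = y := by
      have := abs_nonneg (x - y)
      have : |x - y| = 0 := le_antisymm hxy this
      have := abs_eq_zero.mp this
      linarith
    rw [this]
    simp
  | succ m ih =>
    intro x hx y hy hxy
    have hm1 : (0:ℝ) < (m:ℝ) + 1 := by positivity
    set z := x - (x - y)/((m:ℝ)+1) with hz
    have hzmem : z ∈ Set.Icc a b := by
      obtain ⟨hax, hxb⟩ := hx
      obtain ⟨hay, hyb⟩ := hy
      have hub : (x - y)/((m:ℝ)+1) ≤ x - a := by
        rw [div_le_iff₀ hm1]; nlinarith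
      have hlb : x - b ≤ (x - y)/((m:ℝ)+1) := by
        rw [le_div_iff₀ hm1]; nlinarith
      constructor
      · rw [hz]; linarith
      · rw [hz]; linarith
    have hxz : |x - z| ≤ δ := by
      have : x - z = (x - y)/((m:ℝ)+1) := by rw [hz]; ring
      rw [this, abs_div, abs_of_pos hm1, div_le_iff₀ hm1]
      push_cast at hxy
      linarith
    have hzy : |z - y| ≤ (m:ℝ) * δ := by
      have : z - y = (m:ℝ) * (x - y) / ((m:ℝ)+1) := by rw [hz]; field_simp; ring
      rw [this, abs_div, abs_of_pos hm1, div_le_iff₀ hm1, abs_mul, abs_of_nonneg (Nat.cast_nonneg m)]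
      push_cast at hxy
      nlinarith [abs_nonneg (x-y), Nat.cast_nonneg (α := ℝ) m]
    have h1 := hmod x hx z hzmem hxz
    have h2 := ih z hzmem y hy hzy
    have : |F x - F y| ≤ |F x - F z| + |F z - F y| := by
      have := abs_sub_le (F x) (F z) (F y)
      linarith [abs_sub_le (F x) (F z) (F y)]
    push_cast
    linarith

lemma J_bound (n : ℕ) (hn : 1 ≤ n) :
    ∫ t in (-π)..π, |t| * fejK n t ≤
      (2 + π^2 * (Real.log π + Real.log ((n:ℝ)+1)))/((n:ℝ)+1) := by
  have hπ : (0:ℝ) < π := Real.pi_pos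
  have hn1 : (2:ℝ) ≤ (n:ℝ)+1 := by exact_mod_cast Nat.succ_le_succ hn
  have hnpos : (0:ℝ) < (n:ℝ)+1 := by linarith
  set a : ℝ := 1/((n:ℝ)+1) with ha
  have hapos : 0 < a := by positivity
  have haπ : a ≤ π := by
    have : a ≤ 1/2 := by
      rw [ha, div_le_div_iff₀ hnpos two_pos]; linarith
    linarith [Real.pi_gt_three]
  have hcont : Continuous fun t : ℝ => |t| * fejK n t := continuous_abs.mul (fejK_cont n)
  have hint : ∀ u v : ℝ, IntervalIntegrable (fun t => |t| * fejK n t) volume u v :=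
    fun u v => hcont.intervalIntegrable u v
  set C : ℝ := π^2/(2*((n:ℝ)+1)) with hC
  have hCpos : 0 < C := by positivity
  -- split
  have hsplit : ∫ t in (-π)..π, |t| * fejK n t
      = (∫ t in (-π)..(-a), |t| * fejK n t) + (∫ t in (-a)..a, |t| * fejK n t)
        + ∫ t in a..π, |t| * fejK n t := by
    have h1 := intervalIntegral.integral_add_adjacent_intervals (hint (-a) a) (hint a π)
    have h2 := intervalIntegral.integral_add_adjacent_intervals (hint (-π) (-a)) (hint (-a) π)
    rw [← h1] at h2
    linarith
  -- right tail
  have hright : ∫ t in a..π, |t| * fejK n t ≤ C * (Real.log π + Real.log ((n:ℝ)+1)) := by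
    have hmono : ∫ t in a..π, |t| * fejK n t ≤ ∫ t in a..π, C * (1/t) := by
      apply intervalIntegral.integral_mono_on haπ (hint a π)
      · apply ContinuousOn.intervalIntegrable
        apply ContinuousOn.mul continuousOn_const
        apply ContinuousOn.div continuousOn_const continuousOn_id
        intro t ht
        rw [Set.uIcc_of_le haπ] at ht
        exact ne_of_gt (lt_of_lt_of_le hapos ht.1)
      · intro t ht
        obtain ⟨hta, htπ⟩ := ht
        have htpos : 0 < t := lt_of_lt_of_le hapos hta
        have hd := fejK_decay n t htpos htπ
        have habs : |t| = t := abs_of_pos htpos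
        rw [habs]
        calc t * fejK n t ≤ t * (π^2 / (2*((n:ℝ)+1)*t^2)) :=
              mul_le_mul_of_nonneg_left hd htpos.le
          _ = C * (1/t) := by rw [hC]; field_simp
    have hcalc : ∫ t in a..π, C * (1/t) = C * (Real.log π + Real.log ((n:ℝ)+1)) := by
      rw [intervalIntegral.integral_const_mul, integral_one_div]
      · congr 1
        rw [ha]
        rw [show π / (1/((n:ℝ)+1)) = π * ((n:ℝ)+1) by field_simp]
        exact Real.log_mul hπ.ne' hnpos.ne'
      · rw [Set.uIcc_of_le haπ]
        intro h0
        exact absurd h0.1 (not_le.mpr hapos)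
    linarith
  -- left tail
  have hleft : ∫ t in (-π)..(-a), |t| * fejK n t ≤ C * (Real.log π + Real.log ((n:ℝ)+1)) := by
    have hba : -π ≤ -a := by linarith
    have hmono : ∫ t in (-π)..(-a), |t| * fejK n t ≤ ∫ t in (-π)..(-a), C * (-(1/t)) := by
      apply intervalIntegral.integral_mono_on hba (hint _ _)
      · apply ContinuousOn.intervalIntegrable
        apply ContinuousOn.mul continuousOn_const
        apply ContinuousOn.neg
        apply ContinuousOn.div continuousOn_const continuousOn_id
        intro t ht
        rw [Set.uIcc_of_le hba] at ht
        exact ne_of_lt (lt_of_le_of_lt ht.2 (by linarith))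
      · intro t ht
        obtain ⟨htπ, hta⟩ := ht
        have htneg : t < 0 := lt_of_le_of_lt hta (by linarith)
        have hmt : 0 < -t := by linarith
        have hmtπ : -t ≤ π := by linarith
        have hd := fejK_decay n (-t) hmt hmtπ
        have heq : fejK n t = fejK n (-t) := by
          rw [← fejK_even]
        have habs : |t| = -t := abs_of_neg htneg
        rw [habs, heq]
        calc (-t) * fejK n (-t) ≤ (-t) * (π^2 / (2*((n:ℝ)+1)*(-t)^2)) :=
              mul_le_mul_of_nonneg_left hd hmt.le
          _ = C * (-(1/t)) := by rw [hC]; field_simp [htneg.ne]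
    have hcalc : ∫ t in (-π)..(-a), C * (-(1/t)) = C * (Real.log π + Real.log ((n:ℝ)+1)) := by
      have h0 : (0:ℝ) ∉ Set.uIcc (-π) (-a) := by
        rw [Set.uIcc_of_le hba]
        intro h0
        exact absurd h0.2 (not_le.mpr (by linarith))
      rw [intervalIntegral.integral_const_mul, intervalIntegral.integral_neg, integral_one_div h0]
      rw [show (-a)/(-π) = a/π by ring]
      rw [show a/π = (π/a)⁻¹ by rw [inv_div]]
      rw [Real.log_inv, neg_neg]
      congr 1
      rw [ha, show π / (1/((n:ℝ)+1)) = π * ((n:ℝ)+1) by field_simp]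
      exact Real.log_mul hπ.ne' hnpos.ne'
    linarith
  -- middle
  have hmid : ∫ t in (-a)..a, |t| * fejK n t ≤ 2/((n:ℝ)+1) := by
    have hmono : ∫ t in (-a)..a, |t| * fejK n t ≤ ∫ t in (-a)..a, a * ((n:ℝ)+1) := by
      apply intervalIntegral.integral_mono_on (by linarith) (hint _ _)
        intervalIntegrable_const
      intro t ht
      obtain ⟨h1, h2⟩ := ht
      have habs : |t| ≤ a := abs_le.mpr ⟨h1, h2⟩
      exact mul_le_mul habs (fejK_le_linear n t) (fejK_nonneg n t) hapos.le
    have : ∫ t in (-a)..a, a * ((n:ℝ)+1) = 2 * a * (a * ((n:ℝ)+1)) := by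
      rw [intervalIntegral.integral_const, smul_eq_mul]
      ring
    rw [this] at hmono
    have : 2 * a * (a * ((n:ℝ)+1)) = 2/((n:ℝ)+1) := by
      rw [ha]; field_simp
    linarith
  rw [hsplit]
  have : C * (Real.log π + Real.log ((n:ℝ)+1)) * 2 + 2/((n:ℝ)+1)
      = (2 + π^2 * (Real.log π + Real.log ((n:ℝ)+1)))/((n:ℝ)+1) := by
    rw [hC]; field_simp; ring
  linarith

end FejerAux

theorem fejer_mean_modulus_of_continuity_bound :
    ∃ c : ℝ, 0 < c ∧
      ∀ (F₀ : ℝ → ℝ) (ω : ℝ → ℝ) (n : ℕ),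
        ContinuousOn F₀ (Icc (-π) π) →
        (∀ δ : ℝ, 0 ≤ ω δ) →
        (∀ δ : ℝ, ∀ t ∈ Icc (-π) π, ∀ s ∈ Icc (-π) π, |t - s| ≤ δ →
          |F₀ t - F₀ s| ≤ ω δ) →
        1 ≤ n →
        |F₀ 0 - (1 / π) * ∫ t in (-π)..π,
            F₀ t * (1/2 + ∑ k ∈ Finset.Icc 1 n,
              (1 - (k : ℝ) / (n + 1)) * Real.cos (k * t))| ≤
          c * ω (Real.log (n + 1) / (n + 1)) := by
  refine ⟨100, by norm_num, ?_⟩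
  intro F₀ ω n hF hω hmod hn
  have hπ : (0:ℝ) < π := Real.pi_pos
  have hππ : -π ≤ π := by linarith
  have hn1 : (2:ℝ) ≤ (n:ℝ)+1 := by exact_mod_cast Nat.succ_le_succ hn
  have hN : (0:ℝ) < (n:ℝ)+1 := by linarith
  have hL : 0 < Real.log ((n:ℝ)+1) := Real.log_pos (by linarith)
  set L : ℝ := Real.log ((n:ℝ)+1) with hLdef
  set δ : ℝ := L/((n:ℝ)+1) with hδdef
  have hδ : 0 < δ := by positivity
  show |F₀ 0 - (1/π) * ∫ t in (-π)..π, F₀ t * fejK n t| ≤ 100 * ω δ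
  -- pointwise modulus bound
  have hpt : ∀ t ∈ Set.Icc (-π) π, |F₀ 0 - F₀ t| ≤ (|t|/δ + 1) * ω δ := by
    intro t ht
    have h0mem : (0:ℝ) ∈ Set.Icc (-π) π := ⟨by linarith, by linarith⟩
    have hce : |t| ≤ (⌈|t|/δ⌉₊ : ℝ) * δ := by
      have := Nat.le_ceil (|t|/δ)
      rw [div_le_iff₀ hδ] at this
      linarith
    have hchain := chain_bound F₀ ω (-π) π δ hδ (hmod δ) (⌈|t|/δ⌉₊) 0 h0mem t ht
      (by rw [zero_sub, abs_neg]; exact hce)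
    have hm : (⌈|t|/δ⌉₊ : ℝ) ≤ |t|/δ + 1 := (Nat.ceil_lt_add_one (by positivity)).le
    calc |F₀ 0 - F₀ t| ≤ (⌈|t|/δ⌉₊ : ℝ) * ω δ := hchain
      _ ≤ (|t|/δ + 1) * ω δ := mul_le_mul_of_nonneg_right hm (hω δ)
  have hIcc : Set.uIcc (-π) π = Set.Icc (-π) π := Set.uIcc_of_le hππ
  have hFK_int : IntervalIntegrable (fun t => F₀ t * fejK n t) volume (-π) π := by
    apply ContinuousOn.intervalIntegrable
    rw [hIcc]
    exact hF.mul (fejK_cont n).continuousOn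
  have hK_int : ∀ u v : ℝ, IntervalIntegrable (fejK n) volume u v :=
    fun u v => (fejK_cont n).intervalIntegrable u v
  have hsub_int : IntervalIntegrable (fun t => (F₀ 0 - F₀ t) * fejK n t) volume (-π) π := by
    apply ContinuousOn.intervalIntegrable
    rw [hIcc]
    exact (continuousOn_const.sub hF).mul (fejK_cont n).continuousOn
  -- step A
  have hA : F₀ 0 - (1/π) * ∫ t in (-π)..π, F₀ t * fejK n t
      = (1/π) * ∫ t in (-π)..π, (F₀ 0 - F₀ t) * fejK n t := by
    have h1 : ∫ t in (-π)..π, (F₀ 0 - F₀ t) * fejK n t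
        = (∫ t in (-π)..π, F₀ 0 * fejK n t) - ∫ t in (-π)..π, F₀ t * fejK n t := by
      rw [← intervalIntegral.integral_sub ((hK_int _ _).const_mul _) hFK_int]
      apply intervalIntegral.integral_congr
      intro t _
      ring
    have h2 : ∫ t in (-π)..π, F₀ 0 * fejK n t = F₀ 0 * π := by
      rw [intervalIntegral.integral_const_mul, fejK_integral]
    rw [h1, h2]
    field_simp
  -- step B
  have hg_int : IntervalIntegrable (fun t => (|t|/δ + 1) * ω δ * fejK n t) volume (-π) π := by
    apply Continuous.intervalIntegrable
    exact (((continuous_abs.div_const δ).add continuous_const).mul continuous_const).mul (fejK_cont n)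
  have hB : |∫ t in (-π)..π, (F₀ 0 - F₀ t) * fejK n t|
      ≤ ∫ t in (-π)..π, (|t|/δ + 1) * ω δ * fejK n t := by
    calc |∫ t in (-π)..π, (F₀ 0 - F₀ t) * fejK n t|
        ≤ ∫ t in (-π)..π, |(F₀ 0 - F₀ t) * fejK n t| :=
          intervalIntegral.abs_integral_le_integral_abs hππ
      _ ≤ ∫ t in (-π)..π, (|t|/δ + 1) * ω δ * fejK n t := by
          apply intervalIntegral.integral_mono_on hππ hsub_int.abs hg_int
          intro t ht
          rw [abs_mul, abs_of_nonneg (fejK_nonneg n t)]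
          exact mul_le_mul_of_nonneg_right (hpt t ht) (fejK_nonneg n t)
  -- step C
  have hC : ∫ t in (-π)..π, (|t|/δ + 1) * ω δ * fejK n t
      = (ω δ/δ) * (∫ t in (-π)..π, |t| * fejK n t) + ω δ * π := by
    have hco : ∀ t : ℝ, (|t|/δ + 1) * ω δ * fejK n t
        = (ω δ/δ) * (|t| * fejK n t) + ω δ * fejK n t := by
      intro t
      field_simp
    rw [intervalIntegral.integral_congr (fun t _ => hco t),
      intervalIntegral.integral_add (f := fun t => ω δ/δ * (|t| * fejK n t)) (g := fun t => ω δ * fejK n t)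
        (((continuous_abs.mul (fejK_cont n)).intervalIntegrable _ _).const_mul _)
        ((hK_int _ _).const_mul _),
      intervalIntegral.integral_const_mul, intervalIntegral.integral_const_mul, fejK_integral]
  -- numerics
  have hlogπ : Real.log π ≤ 1.39 := by
    calc Real.log π ≤ Real.log 4 := Real.log_le_log hπ Real.pi_le_four
      _ = 2 * Real.log 2 := by
          rw [show (4:ℝ) = 2^2 by norm_num, Real.log_pow]
          push_cast; ring
      _ ≤ 1.39 := by nlinarith [Real.log_two_lt_d9]
  have hL2 : 0.69 ≤ L := by
    have := Real.log_le_log two_pos hn1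
    have := Real.log_two_gt_d9
    rw [hLdef]
    linarith
  have hπ2 : π^2 ≤ 16 := by nlinarith [Real.pi_le_four]
  -- J bound and final combination
  have hJ := J_bound n hn
  set J : ℝ := ∫ t in (-π)..π, |t| * fejK n t with hJdef
  have hJb : (2 + π^2 * (Real.log π + L))/((n:ℝ)+1) ≤ 99 * π * δ := by
    rw [hδdef, div_le_iff₀ hN]
    have he : 99 * π * (L/((n:ℝ)+1)) * ((n:ℝ)+1) = 99 * π * L := by
      field_simp
    rw [he]
    have h99 : (297:ℝ) ≤ 99 * π := by nlinarith [Real.pi_gt_three]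
    nlinarith [Real.log_nonneg (by linarith : (1:ℝ) ≤ π), hL, hlogπ, hπ2, hL2]
  have hJδ : (ω δ/δ) * J ≤ 99 * π * ω δ := by
    have h1 : (ω δ/δ) * J ≤ (ω δ/δ) * (99 * π * δ) := by
      apply mul_le_mul_of_nonneg_left _ (div_nonneg (hω δ) hδ.le)
      linarith [hJ]
    have h2 : (ω δ/δ) * (99 * π * δ) = 99 * π * ω δ := by
      field_simp
    linarith
  rw [hA, abs_mul, abs_of_pos (by positivity : (0:ℝ) < 1/π)]
  have hfinal : (1/π) * |∫ t in (-π)..π, (F₀ 0 - F₀ t) * fejK n t|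
      ≤ (1/π) * ((ω δ/δ) * J + ω δ * π) := by
    apply mul_le_mul_of_nonneg_left _ (by positivity)
    rw [← hC]
    exact hB
  have hlast : (1/π) * ((ω δ/δ) * J + ω δ * π) ≤ 100 * ω δ := by
    rw [div_mul_eq_mul_div, div_le_iff₀ hπ]
    nlinarith [hJδ, hω δ, hπ]
  linarith
end

section
/- If f ∈ L¹(𝕋), F(x) = ∫_0^x f(t) dt, and ε_n → 0⁺, then the Lebesgue means Λ_n(f; x) = Σ_{k∈ℤ} (sin(k ε_n)/(k ε_n)) f̂_k e^{ikx} (coefficient 1 at k = 0) satisfy Λ_n(f; x) = (F(x + ε_n) − F(x − ε_n))/(2ε_n); consequently Λ_n(f; x) → d_f(x) at every d-point x of f. -/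
open Real Complex MeasureTheory Filter

lemma my_integrable (f : ℝ → ℂ) (hint : LocallyIntegrable f) (e : ℝ) (he : 0 < e) (k : ℤ) :
    Integrable (Function.uncurry fun (y u : ℝ) => Complex.exp (-Complex.I * k * y) * f (u + y))
      ((volume.restrict (Set.Ioc (-π) π)).prod (volume.restrict (Set.Ioc (-e) e))) := by
  have hq : Measure.QuasiMeasurePreserving (fun p : ℝ × ℝ => p.2 + p.1)
      ((volume : Measure ℝ).prod volume) volume :=
    Measure.quasiMeasurePreserving_snd.comp
      (measurePreserving_prod_add_swap volume volume).quasiMeasurePreserving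
  have h1 : AEStronglyMeasurable (fun p : ℝ × ℝ => f (p.2 + p.1))
      ((volume : Measure ℝ).prod volume) :=
    hint.aestronglyMeasurable.comp_quasiMeasurePreserving hq
  have h2 : AEStronglyMeasurable
      (Function.uncurry fun (y u : ℝ) => Complex.exp (-Complex.I * k * y) * f (u + y))
      ((volume : Measure ℝ).prod volume) := by
    have hc : Continuous (fun p : ℝ × ℝ => Complex.exp (-Complex.I * k * p.1)) := by fun_prop
    exact hc.aestronglyMeasurable.mul h1
  have h2r : AEStronglyMeasurable
      (Function.uncurry fun (y u : ℝ) => Complex.exp (-Complex.I * k * y) * f (u + y))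
      ((volume.restrict (Set.Ioc (-π) π)).prod (volume.restrict (Set.Ioc (-e) e))) := by
    rw [Measure.prod_restrict]; exact h2.restrict
  rw [MeasureTheory.integrable_prod_iff h2r]
  constructor
  · refine Filter.Eventually.of_forall fun y => ?_
    have hfi : IntervalIntegrable f volume (-e + y) (e + y) :=
      (hint.integrableOn_isCompact isCompact_uIcc).intervalIntegrable
    have h := hfi.comp_add_right y
    rw [show -e + y - y = -e by ring, show e + y - y = e by ring] at h
    have h' : IntegrableOn (fun u => f (u + y)) (Set.Ioc (-e) e) volume :=
      (intervalIntegrable_iff_integrableOn_Ioc_of_le (by linarith)).mp h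
    simpa [Function.uncurry] using h'.const_mul (Complex.exp (-Complex.I * k * y))
  · have hnorm : ∀ y u : ℝ,
        ‖Complex.exp (-Complex.I * k * y) * f (u + y)‖ = ‖f (u + y)‖ := by
      intro y u
      rw [norm_mul]
      have : ‖Complex.exp (-Complex.I * (k : ℂ) * (y : ℝ))‖ = 1 := by
        rw [Complex.norm_exp]
        simp [mul_comm, mul_assoc]
      rw [this, one_mul]
    refine Integrable.mono' (g := fun _ : ℝ => ∫ s in Set.Icc (-π - e) (π + e), ‖f s‖)
      ?_ ?_ ?_
    · exact integrableOn_const measure_Ioc_lt_top.ne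
    · exact h2r.norm.integral_prod_right'
    · rw [ae_restrict_iff' measurableSet_Ioc]
      refine Filter.Eventually.of_forall fun y hy => ?_
      have hint2 : (∫ u in Set.Ioc (-e) e, ‖f (u + y)‖) ≤
          ∫ s in Set.Icc (-π - e) (π + e), ‖f s‖ := by
        have h1' : (∫ u in Set.Ioc (-e) e, ‖f (u + y)‖) = ∫ s in Set.Ioc (-e + y) (e + y), ‖f s‖ := by
          rw [← intervalIntegral.integral_of_le (by linarith), ← intervalIntegral.integral_of_le
            (by linarith : -e + y ≤ e + y),
            intervalIntegral.integral_comp_add_right (fun s => ‖f s‖) y]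
        rw [h1']
        refine setIntegral_mono_set ((hint.integrableOn_isCompact isCompact_Icc).norm)
          (Filter.Eventually.of_forall fun s => norm_nonneg _)
          (Set.Ioc_subset_Icc_self.trans (Set.Icc_subset_Icc (by linarith [hy.1])
            (by linarith [hy.2]))).eventuallyLE
      calc ‖∫ u in Set.Ioc (-e) e,
            ‖Function.uncurry (fun (y u : ℝ) => Complex.exp (-Complex.I * k * y) * f (u + y)) (y, u)‖‖
          = ∫ u in Set.Ioc (-e) e, ‖f (u + y)‖ := by
            rw [norm_of_nonneg (integral_nonneg fun u => norm_nonneg _)]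
            simp only [Function.uncurry, hnorm]
        _ ≤ _ := hint2


lemma my_swap (f : ℝ → ℂ) (hper : Function.Periodic f (2 * π)) (hint : LocallyIntegrable f)
    (e : ℝ) (he : 0 < e) (k : ℤ) :
    (∫ y in (-π)..π, Complex.exp (-Complex.I * k * y) * ∫ u in (-e)..e, f (u + y)) =
      (∫ t in (-π)..π, f t * Complex.exp (-Complex.I * k * t)) *
        ∫ u in (-e)..e, Complex.exp (Complex.I * k * u) := by
  have hpi : (-π : ℝ) ≤ π := by linarith [pi_pos]
  set h : ℝ → ℂ := fun s => f s * Complex.exp (-Complex.I * k * s) with hh_def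
  have step0 : (∫ y in (-π)..π, Complex.exp (-Complex.I * k * y) * ∫ u in (-e)..e, f (u + y)) =
      ∫ y in (-π)..π, ∫ u in (-e)..e, Complex.exp (-Complex.I * k * y) * f (u + y) := by
    refine intervalIntegral.integral_congr fun y _ => ?_
    exact (intervalIntegral.integral_const_mul _ _).symm
  rw [step0]
  have step1 : (∫ y in (-π)..π, ∫ u in (-e)..e, Complex.exp (-Complex.I * k * y) * f (u + y)) =
      ∫ u in (-e)..e, ∫ y in (-π)..π, Complex.exp (-Complex.I * k * y) * f (u + y) := by
    rw [intervalIntegral.integral_of_le hpi, intervalIntegral.integral_of_le (by linarith : -e ≤ e)]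
    simp_rw [intervalIntegral.integral_of_le hpi, intervalIntegral.integral_of_le
      (by linarith : -e ≤ e)]
    exact MeasureTheory.integral_integral_swap (my_integrable f hint e he k)
  rw [step1]
  have hh : Function.Periodic h (2 * π) := by
    intro s
    simp only [hh_def]
    rw [hper s]
    congr 1
    rw [show (-Complex.I * k * ((s + 2 * π : ℝ) : ℂ)) =
        -Complex.I * k * s + (-k : ℤ) * (2 * π * Complex.I) by push_cast; ring,
      Complex.exp_add, Complex.exp_int_mul_two_pi_mul_I, mul_one]
  have inner : ∀ u : ℝ, (∫ y in (-π)..π, Complex.exp (-Complex.I * k * y) * f (u + y)) =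
      Complex.exp (Complex.I * k * u) * ∫ t in (-π)..π, h t := by
    intro u
    have e1 : (∫ y in (-π)..π, Complex.exp (-Complex.I * k * y) * f (u + y)) =
        ∫ y in (-π)..π, Complex.exp (Complex.I * k * u) * h (y + u) := by
      refine intervalIntegral.integral_congr fun y _ => ?_
      simp only [hh_def]
      have hx : Complex.exp (Complex.I * k * u) *
          Complex.exp (-Complex.I * k * ((y + u : ℝ) : ℂ)) =
          Complex.exp (-Complex.I * k * y) := by
        rw [← Complex.exp_add]; congr 1; push_cast; ring
      rw [add_comm u y, ← hx]; ring
    rw [e1, intervalIntegral.integral_const_mul]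
    congr 1
    rw [intervalIntegral.integral_comp_add_right h u]
    have := hh.intervalIntegral_add_eq (-π + u) (-π)
    rw [show -π + u + 2 * π = π + u by ring, show -π + 2 * π = π by ring] at this
    exact this
  rw [intervalIntegral.integral_congr (fun u _ => inner u)]
  rw [intervalIntegral.integral_mul_const]
  ring


lemma my_exp_zero (e : ℝ) : (∫ u in (-e)..e, Complex.exp (Complex.I * (0 : ℤ) * u)) = 2 * e := by
  simp
  ring

lemma my_exp_ne (e : ℝ) (k : ℤ) (hk : k ≠ 0) :
    (∫ u in (-e)..e, Complex.exp (Complex.I * k * u)) =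
      ((2 * Real.sin (k * e) / k : ℝ) : ℂ) := by
  have hkC : (k : ℂ) ≠ 0 := Int.cast_ne_zero.mpr hk
  have hc : Complex.I * (k : ℂ) ≠ 0 := mul_ne_zero Complex.I_ne_zero hkC
  rw [integral_exp_mul_complex hc]
  have h1 : Complex.I * (k : ℂ) * (e : ℝ) = ((k * e : ℝ) : ℂ) * Complex.I := by push_cast; ring
  have h2 : Complex.I * (k : ℂ) * ((-e : ℝ) : ℂ) = (-((k * e : ℝ) : ℂ)) * Complex.I := by
    push_cast; ring
  rw [h1, h2, Complex.exp_mul_I, Complex.exp_mul_I, Complex.cos_neg, Complex.sin_neg]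
  rw [show Complex.cos ((k*e:ℝ):ℂ) + Complex.sin ((k*e:ℝ):ℂ) * Complex.I -
      (Complex.cos ((k*e:ℝ):ℂ) + -Complex.sin ((k*e:ℝ):ℂ) * Complex.I) =
      2 * Complex.sin ((k*e:ℝ):ℂ) * Complex.I by ring]
  rw [← Complex.ofReal_sin]
  push_cast
  field_simp


lemma my_main (f : ℝ → ℂ) (hper : Function.Periodic f (2 * π)) (hint : LocallyIntegrable f)
    (F : ℝ → ℂ) (hF : ∀ x : ℝ, F x = ∫ t in (0:ℝ)..x, f t)
    (e : ℝ) (he : 0 < e)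
    (hsum : Summable (fun k : ℤ =>
      (if k = 0 then 1 else ((Real.sin (k * e) / (k * e) : ℝ) : ℂ)) *
        ((1 / (2 * π) : ℂ) * ∫ t in (-π)..π, f t * Complex.exp (-Complex.I * k * t))))
    (x : ℝ) (L : ℂ)
    (hL : HasSum (fun k : ℤ =>
      (if k = 0 then 1 else ((Real.sin (k * e) / (k * e) : ℝ) : ℂ)) *
        ((1 / (2 * π) : ℂ) * ∫ t in (-π)..π, f t * Complex.exp (-Complex.I * k * t)) *
        Complex.exp (Complex.I * k * x)) L) :
    L = (F (x + e) - F (x - e)) / (2 * (e : ℂ)) := by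
  have hπ : (0:ℝ) < π := pi_pos
  haveI : Fact (0 < 2 * π) := ⟨by linarith⟩
  have hfint : ∀ a b : ℝ, IntervalIntegrable f volume a b := fun a b =>
    (hint.integrableOn_isCompact isCompact_uIcc).intervalIntegrable
  set c : ℤ → ℂ := fun k =>
      (if k = 0 then 1 else ((Real.sin (k * e) / (k * e) : ℝ) : ℂ)) *
        ((1 / (2 * π) : ℂ) * ∫ t in (-π)..π, f t * Complex.exp (-Complex.I * k * t)) with hc_def
  -- the averaged function g
  set g : ℝ → ℂ := fun y => (F (y + e) - F (y - e)) / (2 * (e : ℂ)) with hg_def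
  have hFeq : F = fun z => ∫ t in (0:ℝ)..z, f t := funext hF
  have hFcont : Continuous F := by
    rw [hFeq]; exact intervalIntegral.continuous_primitive hfint 0
  have hFadd : ∀ z : ℝ, F (z + 2 * π) = F z + ∫ t in (-π)..π, f t := by
    intro z
    have h1 : F (z + 2*π) - F z = ∫ t in z..(z + 2*π), f t := by
      rw [hF, hF]
      exact intervalIntegral.integral_interval_sub_left (hfint 0 (z + 2*π)) (hfint 0 z)
    have h2 : (∫ t in z..(z + 2*π), f t) = ∫ t in (-π)..π, f t := by
      have := hper.intervalIntegral_add_eq z (-π)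
      rwa [show -π + 2 * π = π by ring] at this
    linear_combination h1 + h2
  have hgper : Function.Periodic g (2 * π) := by
    intro y
    simp only [hg_def]
    rw [show y + 2*π + e = (y + e) + 2*π by ring, show y + 2*π - e = (y - e) + 2*π by ring,
      hFadd, hFadd]
    ring_nf
  have hgcont : Continuous g := by
    apply Continuous.div_const
    exact (hFcont.comp (continuous_id.add continuous_const)).sub
      (hFcont.comp (continuous_id.sub continuous_const))
  -- lift to the circle
  set G : C(AddCircle (2 * π), ℂ) := ⟨hgper.lift, hgcont.quotient_liftOn' _⟩ with hG_def
  have hGcoe : ∀ y : ℝ, G (y : AddCircle (2 * π)) = g y := fun y => rfl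
  -- the g-values as averages of f
  have hgint : ∀ y : ℝ, g y = (1 / (2 * (e:ℂ))) * ∫ u in (-e)..e, f (u + y) := by
    intro y
    have h1 : F (y + e) - F (y - e) = ∫ t in (y - e)..(y + e), f t := by
      rw [hF, hF]
      exact intervalIntegral.integral_interval_sub_left (hfint 0 (y+e)) (hfint 0 (y-e))
    have h2 : (∫ u in (-e)..e, f (u + y)) = ∫ t in (y - e)..(y + e), f t := by
      rw [intervalIntegral.integral_comp_add_right f y, show -e + y = y - e by ring,
        show e + y = y + e by ring]
    simp only [hg_def]
    rw [h1, ← h2]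
    ring
  -- Fourier coefficients of G
  have hcoeff : ∀ k : ℤ, fourierCoeff (⇑G) k = c k := by
    intro k
    rw [fourierCoeff_eq_intervalIntegral (⇑G) k (-π), show -π + 2*π = π by ring]
    have hint1 : ∀ y : ℝ, @fourier (2*π) (-k) (y : AddCircle (2*π)) • G (y : AddCircle (2*π)) =
        (1 / (2 * (e:ℂ))) * (Complex.exp (-Complex.I * k * y) * ∫ u in (-e)..e, f (u + y)) := by
      intro y
      rw [smul_eq_mul, hGcoe, hgint, fourier_coe_apply]
      rw [show 2 * (π:ℂ) * Complex.I * ((-k : ℤ) : ℂ) * (y:ℂ) / ((2 * π : ℝ) : ℂ)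
          = -Complex.I * k * y by
        have hπC : ((π:ℝ):ℂ) ≠ 0 := Complex.ofReal_ne_zero.mpr pi_ne_zero
        push_cast
        field_simp]
      ring
    rw [intervalIntegral.integral_congr (fun y _ => hint1 y),
      intervalIntegral.integral_const_mul, my_swap f hper hint e he k]
    have hsmul : ∀ z : ℂ, (1 / (2*π) : ℝ) • z = (1 / (2*π : ℝ) : ℂ) * z := by
      intro z
      rw [Complex.real_smul]
      norm_cast
    rw [hsmul]
    rcases eq_or_ne k 0 with rfl | hk
    · rw [my_exp_zero e]
      simp only [hc_def, if_pos rfl]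
      have heC : (e:ℂ) ≠ 0 := Complex.ofReal_ne_zero.mpr he.ne'
      have hπC : ((π:ℝ):ℂ) ≠ 0 := Complex.ofReal_ne_zero.mpr hπ.ne'
      push_cast
      field_simp
      try ring
    · rw [my_exp_ne e k hk]
      simp only [hc_def, if_neg hk]
      have heC : (e:ℂ) ≠ 0 := Complex.ofReal_ne_zero.mpr he.ne'
      have hπC : ((π:ℝ):ℂ) ≠ 0 := Complex.ofReal_ne_zero.mpr hπ.ne'
      have hkC : ((k:ℝ):ℂ) ≠ 0 := by
        norm_cast
      push_cast
      field_simp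
      try ring
  -- summability and pointwise convergence
  have hsumG : Summable (fourierCoeff (⇑G)) := hsum.congr fun k => (hcoeff k).symm
  have hps := has_pointwise_sum_fourier_series_of_summable hsumG (x : AddCircle (2*π))
  have hfun : (fun k : ℤ => fourierCoeff (⇑G) k • @fourier (2*π) k (x : AddCircle (2*π))) =
      fun k : ℤ => c k * Complex.exp (Complex.I * k * x) := by
    funext k
    rw [hcoeff, smul_eq_mul, fourier_coe_apply]
    congr 2
    have hπC : ((π:ℝ):ℂ) ≠ 0 := Complex.ofReal_ne_zero.mpr pi_ne_zero
    push_cast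
    field_simp
  rw [hfun, hGcoe x] at hps
  exact hL.unique hps


theorem lebesgue_means_converge_at_d_points
    (f : ℝ → ℂ) (hper : Function.Periodic f (2 * π))
    (hint : LocallyIntegrable f)
    (F : ℝ → ℂ) (hF : ∀ x : ℝ, F x = ∫ t in (0:ℝ)..x, f t)
    (ε : ℕ → ℝ) (hε : ∀ n, 0 < ε n) (hε0 : Tendsto ε atTop (nhds 0))
    (Λ : ℕ → ℝ → ℂ)
    (hΛ : ∀ n : ℕ, ∀ x : ℝ, HasSum (fun k : ℤ =>
      (if k = 0 then 1 else ((Real.sin (k * ε n) / (k * ε n) : ℝ) : ℂ)) *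
        ((1 / (2 * π) : ℂ) * ∫ t in (-π)..π, f t * Complex.exp (-Complex.I * k * t)) *
        Complex.exp (Complex.I * k * x)) (Λ n x)) :
    (∀ n : ℕ, ∀ x : ℝ, Λ n x = (F (x + ε n) - F (x - ε n)) / (2 * ε n)) ∧
    ∀ x : ℝ, ∀ d : ℂ,
      Tendsto (fun h : ℝ => (F (x + h) - F x) / (h : ℂ))
        (nhdsWithin 0 {0}ᶜ) (nhds d) →
      Tendsto (fun n => Λ n x) atTop (nhds d) := by
  have key : ∀ n : ℕ, ∀ x : ℝ, Λ n x = (F (x + ε n) - F (x - ε n)) / (2 * ε n) := by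
    intro n x
    have hsum : Summable (fun k : ℤ =>
        (if k = 0 then 1 else ((Real.sin (k * ε n) / (k * ε n) : ℝ) : ℂ)) *
          ((1 / (2 * π) : ℂ) * ∫ t in (-π)..π, f t * Complex.exp (-Complex.I * k * t))) := by
      have := (hΛ n 0).summable
      simpa using this
    exact my_main f hper hint F hF (ε n) (hε n) hsum x (Λ n x) (hΛ n x)
  refine ⟨key, ?_⟩
  intro x d hd
  have h1 : Tendsto (fun n => ε n) atTop (nhdsWithin 0 {0}ᶜ) :=
    tendsto_nhdsWithin_iff.mpr ⟨hε0, Filter.Eventually.of_forall fun n =>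
      Set.mem_compl_singleton_iff.mpr (hε n).ne'⟩
  have h2 : Tendsto (fun n => -(ε n)) atTop (nhdsWithin 0 {0}ᶜ) := by
    refine tendsto_nhdsWithin_iff.mpr ⟨?_, Filter.Eventually.of_forall fun n =>
      Set.mem_compl_singleton_iff.mpr (neg_ne_zero.mpr (hε n).ne')⟩
    simpa using hε0.neg
  have hA := hd.comp h1
  have hB := hd.comp h2
  have hT := (hA.add hB).div_const (2 : ℂ)
  rw [show (d + d) / (2:ℂ) = d by ring] at hT
  have heq : ∀ n : ℕ, ((F (x + ε n) - F x) / ((ε n : ℝ) : ℂ)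
        + (F (x + -(ε n)) - F x) / ((-(ε n) : ℝ) : ℂ)) / 2
      = (F (x + ε n) - F (x - ε n)) / (2 * (ε n : ℂ)) := by
    intro n
    have h := Complex.ofReal_ne_zero.mpr (hε n).ne'
    rw [show x + -(ε n) = x - ε n by ring,
      show ((-(ε n) : ℝ) : ℂ) = -((ε n : ℝ) : ℂ) by push_cast; ring, div_neg]
    field_simp
    ring
  have hT' := hT.congr heq
  refine Tendsto.congr (fun n => ?_) hT'
  rw [key n x]
end
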